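/- Let G be a 2×2 matrix, N a positive integer, M ≥ 1 with ‖G^j‖ ≤ M for all 0 < j ≤ N, and G_j = G + Δ_j with δ = max_j ‖Δ_j‖. If N·M·δ < 1, then any product of consecutive matrices G_{k_2} ⋯ G_{k_1} with 1 ≤ k_1 ≤ k_2 ≤ N has norm at most M/(1 − M δ N). -/

import Mathlib

open scoped Matrix.Norms.L2Operator

private def Paux (G : Matrix (Fin 2) (Fin 2) ℝ) (Δ : ℕ → Matrix (Fin 2) (Fin 2) ℝ)
    (k₁ : ℕ) : ℕ → Matrix (Fin 2) (Fin 2) ℝ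
  | 0 => 1
  | n + 1 => (G + Δ (k₁ + n)) * Paux G Δ k₁ n

private lemma paux_list (G : Matrix (Fin 2) (Fin 2) ℝ) (Δ : ℕ → Matrix (Fin 2) (Fin 2) ℝ)
    (k₁ : ℕ) : ∀ n : ℕ,
    (List.ofFn (fun i : Fin (n + 1) => G + Δ (k₁ + n - (i : ℕ)))).prod = Paux G Δ k₁ (n + 1) := by
  intro n
  induction n with
  | zero => simp [Paux]
  | succ n ih =>
    rw [List.ofFn_succ, List.prod_cons]
    have h : (fun i : Fin (n + 1) => G + Δ (k₁ + (n + 1) - ((Fin.succ i) : ℕ))) =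
        (fun i : Fin (n + 1) => G + Δ (k₁ + n - (i : ℕ))) := by
      funext i
      have e : k₁ + (n + 1) - ((Fin.succ i) : ℕ) = k₁ + n - (i : ℕ) := by
        simp only [Fin.val_succ]; omega
      rw [e]
    rw [h, ih]
    simp only [Fin.val_zero, Nat.sub_zero]
    rfl

private lemma paux_expand (G : Matrix (Fin 2) (Fin 2) ℝ) (Δ : ℕ → Matrix (Fin 2) (Fin 2) ℝ)
    (k₁ : ℕ) : ∀ n : ℕ,
    Paux G Δ k₁ n = G ^ n + ∑ j ∈ Finset.range n,
      G ^ (n - 1 - j) * (Δ (k₁ + j) * Paux G Δ k₁ j) := by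
  intro n
  induction n with
  | zero => simp [Paux]
  | succ n ih =>
    have h1 : ∀ j ∈ Finset.range n,
        G ^ (n + 1 - 1 - j) * (Δ (k₁ + j) * Paux G Δ k₁ j) =
        G * (G ^ (n - 1 - j) * (Δ (k₁ + j) * Paux G Δ k₁ j)) := by
      intro j hj
      simp only [Finset.mem_range] at hj
      rw [show n + 1 - 1 - j = (n - 1 - j) + 1 from by omega, pow_succ', mul_assoc]
    rw [Finset.sum_range_succ, Finset.sum_congr rfl h1, ← Finset.mul_sum]
    have h2 : Paux G Δ k₁ (n + 1) = G * Paux G Δ k₁ n + Δ (k₁ + n) * Paux G Δ k₁ n := by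
      show (G + Δ (k₁ + n)) * Paux G Δ k₁ n = _
      rw [add_mul]
    rw [h2, ih, mul_add, pow_succ']
    have h3 : n + 1 - 1 - n = 0 := by omega
    rw [h3, pow_zero, one_mul]
    abel

/-- If `‖G^j‖ ≤ M` for `0 < j ≤ N`, `G_j = G + Δ_j` with `δ = max ‖Δ_j‖` and `N M δ < 1`,
then any product of consecutive matrices `G_{k₂} ⋯ G_{k₁}` with `1 ≤ k₁ ≤ k₂ ≤ N`
has norm at most `M / (1 − M δ N)`. -/
theorem stmt_4 (G : Matrix (Fin 2) (Fin 2) ℝ) (N : ℕ) (hN : 0 < N)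
    (M : ℝ) (hM : 1 ≤ M) (hGj : ∀ j : ℕ, 0 < j → j ≤ N → ‖G ^ j‖ ≤ M)
    (Δ : ℕ → Matrix (Fin 2) (Fin 2) ℝ) (δ : ℝ) (hδ0 : 0 ≤ δ)
    (hδ : ∀ j : ℕ, 1 ≤ j → j ≤ N → ‖Δ j‖ ≤ δ)
    (hsmall : (N : ℝ) * M * δ < 1) :
    ∀ k₁ k₂ : ℕ, 1 ≤ k₁ → k₁ ≤ k₂ → k₂ ≤ N →
      ‖(List.ofFn (fun i : Fin (k₂ - k₁ + 1) => G + Δ (k₂ - (i : ℕ)))).prod‖ ≤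
        M / (1 - M * δ * N) := by
  intro k₁ k₂ hk₁ hle hk₂N
  set C : ℝ := M / (1 - M * δ * N) with hC
  have hd : 0 < 1 - M * δ * N := by nlinarith
  have hM0 : (0 : ℝ) < M := by linarith
  have hC0 : 0 < C := div_pos hM0 hd
  have hCM : M ≤ C := by
    rw [hC, le_div_iff₀ hd]
    nlinarith [mul_nonneg (mul_nonneg hM0.le hδ0) (Nat.cast_nonneg N)]
  have hC1 : (1 : ℝ) ≤ C := le_trans hM hCM
  have hG' : ∀ m : ℕ, m ≤ N → ‖G ^ m‖ ≤ M := by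
    intro m hm
    rcases Nat.eq_zero_or_pos m with h | h
    · subst h; rw [pow_zero, norm_one]; exact hM
    · exact hGj m h hm
  have key : ∀ n : ℕ, k₁ + n ≤ N + 1 → ‖Paux G Δ k₁ n‖ ≤ C := by
    intro n
    induction n using Nat.strong_induction_on with
    | _ n ih =>
      intro hn
      rcases Nat.eq_zero_or_pos n with h0 | h0
      · subst h0
        show ‖(1 : Matrix (Fin 2) (Fin 2) ℝ)‖ ≤ C
        rw [norm_one]; exact hC1
      · rw [paux_expand]
        calc ‖G ^ n + ∑ j ∈ Finset.range n, G ^ (n - 1 - j) * (Δ (k₁ + j) * Paux G Δ k₁ j)‖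
            ≤ ‖G ^ n‖ + ‖∑ j ∈ Finset.range n, G ^ (n - 1 - j) * (Δ (k₁ + j) * Paux G Δ k₁ j)‖ :=
              norm_add_le _ _
          _ ≤ M + (n : ℝ) * (M * (δ * C)) := by
              apply add_le_add (hG' n (by omega))
              calc ‖∑ j ∈ Finset.range n, G ^ (n - 1 - j) * (Δ (k₁ + j) * Paux G Δ k₁ j)‖
                  ≤ ∑ j ∈ Finset.range n, ‖G ^ (n - 1 - j) * (Δ (k₁ + j) * Paux G Δ k₁ j)‖ :=
                    norm_sum_le _ _
                _ ≤ ∑ _j ∈ Finset.range n, M * (δ * C) := by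
                    apply Finset.sum_le_sum
                    intro j hj
                    simp only [Finset.mem_range] at hj
                    calc ‖G ^ (n - 1 - j) * (Δ (k₁ + j) * Paux G Δ k₁ j)‖
                        ≤ ‖G ^ (n - 1 - j)‖ * ‖Δ (k₁ + j) * Paux G Δ k₁ j‖ := norm_mul_le _ _
                      _ ≤ ‖G ^ (n - 1 - j)‖ * (‖Δ (k₁ + j)‖ * ‖Paux G Δ k₁ j‖) := by
                          apply mul_le_mul_of_nonneg_left (norm_mul_le _ _) (norm_nonneg _)
                      _ ≤ M * (δ * C) := by
                          apply mul_le_mul (hG' _ (by omega))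
                          · apply mul_le_mul (hδ _ (by omega) (by omega))
                              (ih j hj (by omega)) (norm_nonneg _) hδ0
                          · positivity
                          · linarith
                _ = (n : ℝ) * (M * (δ * C)) := by
                    rw [Finset.sum_const, Finset.card_range, nsmul_eq_mul]
          _ ≤ M + (N : ℝ) * (M * (δ * C)) := by
              have hnN : (n : ℝ) ≤ (N : ℝ) := by exact_mod_cast (by omega : n ≤ N)
              have h1 : 0 ≤ M * (δ * C) := by positivity
              nlinarith
          _ = C := by
              rw [hC]
              field_simp
              have hx : (1 - M * ↑N * δ) ≠ 0 := (by linarith [hd] : 0 < 1 - M * ↑N * δ).ne'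
              field_simp
              ring
  have hfun : (fun i : Fin (k₂ - k₁ + 1) => G + Δ (k₂ - (i : ℕ))) =
      (fun i : Fin (k₂ - k₁ + 1) => G + Δ (k₁ + (k₂ - k₁) - (i : ℕ))) := by
    funext i
    have e : k₂ - (i : ℕ) = k₁ + (k₂ - k₁) - (i : ℕ) := by omega
    rw [e]
  rw [hfun, paux_list]
  exact key (k₂ - k₁ + 1) (by omega)
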